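/- If σ' is a strategy of Player 0 in the threshold game G_b that is positional and winning from (v*, init(v*)) for the parity condition, then along any consistent play from (v*, init(v*)) the overflow counter values o_j are monotonically non-decreasing and strictly below n for all j. -/
import Mathlib


variable {S : Type*}

/-- The (max-) parity condition: the maximal color occurring infinitely often
is even. -/
def SatParity (Ω : S → ℕ) (ρ : ℕ → S) : Prop :=
  ∃ c, Even c ∧ {j | Ω (ρ j) = c}.Infinite ∧ ∀ c' > c, {j | Ω (ρ j) = c'}.Finite

/-- in the threshold game `G_b` (whose vertices carry an overflow
counter `o` bounded by `n` that either stays equal or increments capped at `n`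
along every edge, such that vertices with saturated counter `o = n` form a sink
component of odd color 1), if `σ` is a positional strategy of Player 0 (with
vertex set `S0`) that is winning from the initial vertex `s0` (with `o s0 = 0`)
for the parity condition, then along any play consistent with `σ` from `s0` the
overflow counter values are monotonically non-decreasing and strictly below `n`. -/
theorem overflow_counter_bounded (S0 : Set S) (E : S → S → Prop)
    (Ω' : S → ℕ) (o : S → ℕ) (n : ℕ) (hn : 0 < n) (σ : S → S) (s0 : S)
    (hcap : ∀ s, o s ≤ n)
    (hstep : ∀ s s', E s s' → o s' = o s ∨ o s' = min (o s + 1) n)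
    (hsink : ∀ s s', o s = n → E s s' → o s' = n)
    (hcol : ∀ s, o s = n → Ω' s = 1)
    (hleg : ∀ s ∈ S0, E s (σ s))
    (hs0 : o s0 = 0)
    (hwin : ∀ ρ : ℕ → S, (∀ j, E (ρ j) (ρ (j + 1))) → ρ 0 = s0 →
      (∀ j, ρ j ∈ S0 → ρ (j + 1) = σ (ρ j)) → SatParity Ω' ρ)
    (ρ : ℕ → S) (hplay : ∀ j, E (ρ j) (ρ (j + 1))) (h0 : ρ 0 = s0)
    (hcons : ∀ j, ρ j ∈ S0 → ρ (j + 1) = σ (ρ j)) :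
    ∀ j, o (ρ j) ≤ o (ρ (j + 1)) ∧ o (ρ j) < n := by
  have mono : ∀ j, o (ρ j) ≤ o (ρ (j + 1)) := by
    intro j
    rcases hstep _ _ (hplay j) with h | h
    · omega
    · have := hcap (ρ j); omega
  have hlt : ∀ j, o (ρ j) < n := by
    by_contra h
    push_neg at h
    obtain ⟨j, hj⟩ := h
    have hjn : o (ρ j) = n := le_antisymm (hcap _) hj
    have hall : ∀ k, j ≤ k → o (ρ k) = n := by
      intro k hk
      induction k with
      | zero =>
        have : j = 0 := Nat.le_zero.mp hk
        subst this; exact hjn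
      | succ k ih =>
        rcases Nat.lt_or_ge j (k+1) with h1 | h1
        · exact hsink _ _ (ih (by omega)) (hplay k)
        · have : j = k + 1 := by omega
          subst this; exact hjn
    obtain ⟨c, hc, hinf, _⟩ := hwin ρ hplay h0 hcons
    obtain ⟨k, hk1, hk2⟩ := hinf.exists_gt j
    have h1 : Ω' (ρ k) = 1 := hcol _ (hall k (le_of_lt hk2))
    rw [Set.mem_setOf_eq] at hk1
    have : c = 1 := by omega
    subst this
    exact (Nat.not_even_iff_odd.mpr odd_one) hc
  exact fun j => ⟨mono j, hlt j⟩
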